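/- Fix an integer n ≥ 2, set b := -n + i, and let D ⊆ {0, 1, …, n²} with Δ := D − D. Let (α_j)_{j≥1} be a sequence with α_j ∈ Δ for all j, set α := π((α_j)), and assume the radix expansion of α in base (b, Δ) is unique: for every sequence (β_j)_{j≥1} with β_j ∈ Δ for all j and π((β_j)) = α, one has β_j = α_j for all j. Then C_{n,D} ∩ (C_{n,D} + α) = {π((z_j)) : z_j ∈ D ∩ (D + α_j) for all j}. -/

import Mathlib

open Complex Filter Pointwise

/-- `piSum b d = ∑_{j≥1} d_j b^{-j}` (0-indexed: `d j` is the `(j+1)`-st digit). -/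
noncomputable def piSum (b : ℂ) (d : ℕ → ℤ) : ℂ :=
  ∑' j : ℕ, (d j : ℂ) * b ^ (-((j : ℤ) + 1))

/-- The restricted digit set `C_{n,D}`. -/
def restrictedDigitSet (n : ℕ) (D : Set ℤ) : Set ℂ :=
  {z | ∃ d : ℕ → ℤ, (∀ j, d j ∈ D) ∧ z = piSum (-(n : ℂ) + Complex.I) d}

lemma summable_piSum (b : ℂ) (hb : 1 < ‖b‖) (d : ℕ → ℤ) (M : ℝ)
    (hM : ∀ j, |(d j : ℝ)| ≤ M) :
    Summable fun j : ℕ => (d j : ℂ) * b ^ (-((j : ℤ) + 1)) := by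
  have hr : ‖b‖⁻¹ < 1 := inv_lt_one_of_one_lt₀ hb
  have hr0 : (0:ℝ) ≤ ‖b‖⁻¹ := inv_nonneg.mpr (le_of_lt (lt_trans one_pos hb))
  apply Summable.of_norm
  refine Summable.of_nonneg_of_le (fun j => norm_nonneg _) (fun j => ?_)
    ((summable_geometric_of_lt_one hr0 hr).mul_left (M * ‖b‖⁻¹))
  have h1 : ‖(d j : ℂ) * b ^ (-((j : ℤ) + 1))‖ = |(d j : ℝ)| * (‖b‖⁻¹ * ‖b‖⁻¹ ^ j) := by
    rw [norm_mul, norm_zpow]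
    have h2 : (-((j : ℤ) + 1)) = -(((j+1 : ℕ)) : ℤ) := by push_cast; ring
    rw [h2, zpow_neg, zpow_natCast, ← inv_pow, pow_succ']
    simp
  rw [h1, ← mul_assoc]
  exact mul_le_mul_of_nonneg_right (mul_le_mul_of_nonneg_right (hM j) hr0)
    (pow_nonneg hr0 j)

lemma piSum_add (b : ℂ) (hb : 1 < ‖b‖) (d e : ℕ → ℤ) (M : ℝ)
    (hMd : ∀ j, |(d j : ℝ)| ≤ M) (hMe : ∀ j, |(e j : ℝ)| ≤ M) :
    piSum b (fun j => d j + e j) = piSum b d + piSum b e := by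
  unfold piSum
  rw [← Summable.tsum_add (summable_piSum b hb d M hMd) (summable_piSum b hb e M hMe)]
  congr 1
  funext j
  push_cast
  ring

theorem stmt_14 (n : ℕ) (hn : 2 ≤ n) (D : Set ℤ)
    (hD : D ⊆ Set.Icc 0 ((n : ℤ) ^ 2))
    (α : ℕ → ℤ) (hα : ∀ j, α j ∈ D - D)
    (huniq : ∀ β : ℕ → ℤ, (∀ j, β j ∈ D - D) →
      piSum (-(n : ℂ) + Complex.I) β = piSum (-(n : ℂ) + Complex.I) α →
      ∀ j, β j = α j) :
    restrictedDigitSet n D ∩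
        (restrictedDigitSet n D + {piSum (-(n : ℂ) + Complex.I) α}) =
      {z | ∃ zs : ℕ → ℤ, (∀ j, zs j ∈ D ∩ (D + {α j})) ∧
        z = piSum (-(n : ℂ) + Complex.I) zs} := by
  set b : ℂ := -(n : ℂ) + Complex.I with hbdef
  have hb : 1 < ‖b‖ := by
    have h1 : Complex.normSq b = (n:ℝ)^2 + 1 := by
      simp [hbdef, Complex.normSq_apply]
      ring
    have h2 : ‖b‖ ^ 2 = (n:ℝ)^2 + 1 := by
      rw [Complex.sq_norm]; exact h1
    have hn' : (2:ℝ) ≤ (n:ℝ) := by exact_mod_cast hn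
    nlinarith [norm_nonneg b]
  have hboundD : ∀ d : ℕ → ℤ, (∀ j, d j ∈ D) → ∀ j, |(d j : ℝ)| ≤ (n:ℝ)^2 := by
    intro d hd j
    have h := hD (hd j)
    rw [Set.mem_Icc] at h
    have h0 : (0:ℝ) ≤ (d j:ℝ) := by exact_mod_cast h.1
    have h2 : (d j:ℝ) ≤ (n:ℝ)^2 := by exact_mod_cast h.2
    rw [_root_.abs_of_nonneg h0]; exact h2
  have hboundΔ : ∀ d : ℕ → ℤ, (∀ j, d j ∈ D - D) → ∀ j, |(d j : ℝ)| ≤ (n:ℝ)^2 := by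
    intro d hd j
    obtain ⟨x, hx, y, hy, hxy⟩ := hd j
    have hx' := hD hx; have hy' := hD hy
    rw [Set.mem_Icc] at hx' hy'
    have hde : d j = x - y := hxy.symm
    have h1 : (0:ℝ) ≤ (x:ℝ) := by exact_mod_cast hx'.1
    have h2 : (x:ℝ) ≤ (n:ℝ)^2 := by exact_mod_cast hx'.2
    have h3 : (0:ℝ) ≤ (y:ℝ) := by exact_mod_cast hy'.1
    have h4 : (y:ℝ) ≤ (n:ℝ)^2 := by exact_mod_cast hy'.2
    rw [hde, abs_le]
    constructor <;> · push_cast; linarith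
  ext z
  constructor
  · rintro ⟨⟨d, hd, rfl⟩, hz2⟩
    rw [Set.add_singleton] at hz2
    obtain ⟨w, ⟨e, he, rfl⟩, hwe⟩ := hz2
    have hβmem : ∀ j, (fun j => d j - e j) j ∈ D - D := fun j =>
      Set.sub_mem_sub (hd j) (he j)
    have hsum : piSum b (fun j => d j - e j) = piSum b α := by
      have h1 : piSum b (fun j => (d j - e j) + e j) =
          piSum b (fun j => d j - e j) + piSum b e :=
        piSum_add b hb _ _ ((n:ℝ)^2) (hboundΔ _ hβmem) (hboundD e he)
      simp only [sub_add_cancel] at h1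
      have h2 : piSum b d = piSum b e + piSum b α := hwe.symm
      rw [h2] at h1
      linear_combination -h1
    have hβ := huniq _ hβmem hsum
    refine ⟨d, fun j => ⟨hd j, ?_⟩, rfl⟩
    rw [Set.add_singleton]
    refine ⟨e j, he j, ?_⟩
    show e j + α j = d j
    have h := hβ j
    omega
  · rintro ⟨zs, hzs, rfl⟩
    have hzsD : ∀ j, zs j ∈ D := fun j => (hzs j).1
    have he : ∀ j, zs j - α j ∈ D := by
      intro j
      have h := (hzs j).2
      rw [Set.add_singleton] at h
      obtain ⟨x, hx, hxe⟩ := h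
      have hxe' : x + α j = zs j := hxe
      have hxx : x = zs j - α j := by omega
      rwa [hxx] at hx
    refine ⟨⟨zs, hzsD, rfl⟩, ?_⟩
    rw [Set.add_singleton]
    refine ⟨piSum b (fun j => zs j - α j), ⟨_, he, rfl⟩, ?_⟩
    have h1 : piSum b (fun j => (zs j - α j) + α j) =
        piSum b (fun j => zs j - α j) + piSum b α :=
      piSum_add b hb _ _ ((n:ℝ)^2) (hboundD _ he) (hboundΔ α hα)
    simp only [sub_add_cancel] at h1
    exact h1.symm
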